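/- Let n ≥ 3 be an integer and m = 2^{n−1}+2^{n−3}. The diameter of the mixed graph BDM(2,m) is exactly 2n: for every ordered pair (u,v) of vertices there is a directed walk of length at most 2n from u to v in the associated digraph, and there exists an ordered pair of vertices whose distance is exactly 2n. -/

import Mathlib

/-- Vertices of `BDM(2,m)`: `(α, i)_β` is encoded as `(α, i, β)` with `α β : Bool`, `i : ZMod m`. -/
abbrev BDMVertex (m : ℕ) := Bool × ZMod m × Bool

/-- The unique out-neighbour (through an arc) of a vertex of `BDM(2,m)`. -/
def bdmOut (m : ℕ) : BDMVertex m → BDMVertex m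
  | (false, i, false) => (true, 2 * i, true)
  | (false, i, true) => (true, 2 * i + 1, false)
  | (true, i, false) => (false, -2 * i - 1, true)
  | (true, i, true) => (false, -2 * i - 2, false)

/-- The edges of `BDM(2,m)`: `(α,i)_0 ∼ (α,i)_1`. -/
def bdmEdge (m : ℕ) (u v : BDMVertex m) : Prop :=
  u.1 = v.1 ∧ u.2.1 = v.2.1 ∧ u.2.2 = !v.2.2

/-- The arcs of `BDM(2,m)`. -/
def bdmArc (m : ℕ) (u v : BDMVertex m) : Prop := v = bdmOut m u

/-- One step in the associated digraph of `BDM(2,m)` (edge or arc). -/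
def bdmStep (m : ℕ) (u v : BDMVertex m) : Prop := bdmEdge m u v ∨ bdmArc m u v

/-- `hasWalk step d u v` : there is a directed walk of length `d` from `u` to `v`. -/
def hasWalk {V : Type*} (step : V → V → Prop) : ℕ → V → V → Prop
  | 0, u, v => u = v
  | d + 1, u, v => ∃ w, step u w ∧ hasWalk step d w v

namespace BDMAux

/-- one word step: `true` = arc, `false` = edge. -/
def wstep (m : ℕ) (u : BDMVertex m) (s : Bool) : BDMVertex m :=
  if s then bdmOut m u else (u.1, u.2.1, !u.2.2)

def wfold (m : ℕ) (u : BDMVertex m) (w : List Bool) : BDMVertex m :=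
  w.foldl (wstep m) u

lemma wfold_append (m : ℕ) (u : BDMVertex m) (w₁ w₂ : List Bool) :
    wfold m u (w₁ ++ w₂) = wfold m (wfold m u w₁) w₂ :=
  List.foldl_append ..

lemma step_iff (m : ℕ) (u v : BDMVertex m) :
    bdmStep m u v ↔ v = wstep m u false ∨ v = wstep m u true := by
  obtain ⟨a, i, b⟩ := u
  constructor
  · rintro (⟨h1, h2, h3⟩ | h)
    · left
      obtain ⟨a', i', b'⟩ := v
      simp [wstep] at *
      simp [h1, h2, h3]
    · right; simpa [bdmArc, wstep] using h
  · rintro (h | h)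
    · left
      obtain ⟨a', i', b'⟩ := v
      simp [wstep] at h
      simp [bdmEdge, h.1, h.2.1, h.2.2]
    · right; simpa [bdmArc, wstep] using h

lemma walk_iff_word (m : ℕ) (d : ℕ) (u v : BDMVertex m) :
    hasWalk (bdmStep m) d u v ↔ ∃ w : List Bool, w.length = d ∧ wfold m u w = v := by
  induction d generalizing u with
  | zero =>
    constructor
    · intro h; exact ⟨[], rfl, h⟩
    · rintro ⟨w, hw, hf⟩
      rw [List.length_eq_zero_iff] at hw; subst hw; exact hf
  | succ d ih =>
    constructor
    · rintro ⟨x, hs, hw⟩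
      obtain ⟨w, hl, hf⟩ := (ih x).1 hw
      rcases (step_iff m u x).1 hs with h | h
      · exact ⟨false :: w, by simp [hl], by simp [wfold, ← h] at hf ⊢; exact hf⟩
      · exact ⟨true :: w, by simp [hl], by simp [wfold, ← h] at hf ⊢; exact hf⟩
    · rintro ⟨w, hl, hf⟩
      cases w with
      | nil => simp at hl
      | cons s t =>
        refine ⟨wstep m u s, ?_, (ih _).2 ⟨t, by simpa using hl, hf⟩⟩
        rcases s with _ | _
        · exact (step_iff m u _).2 (Or.inl rfl)
        · exact (step_iff m u _).2 (Or.inr rfl)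

lemma wfold_beta (m : ℕ) (w : List Bool) (u : BDMVertex m) :
    (wfold m u w).2.2 = (u.2.2 ^^ decide (w.length % 2 = 1)) := by
  induction w generalizing u with
  | nil => simp [wfold]
  | cons s t ih =>
    have h1 : (wstep m u s).2.2 = !u.2.2 := by
      rcases s with _ | _
      · simp [wstep]
      · obtain ⟨a, i, b⟩ := u
        rcases a with _ | _ <;> rcases b with _ | _ <;> simp [wstep, bdmOut]
    show (wfold m (wstep m u s) t).2.2 = _
    rw [ih (wstep m u s), h1]
    rcases u.2.2 with _ | _ <;> rcases Nat.even_or_odd t.length with he | he <;>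
      · first
        | (simp [Nat.even_iff] at he; simp [List.length_cons, he, Nat.succ_mod_two_eq_one_iff, Nat.succ_mod_two_eq_zero_iff] <;> omega)
        | (simp [Nat.odd_iff] at he; simp [List.length_cons, he, Nat.succ_mod_two_eq_one_iff, Nat.succ_mod_two_eq_zero_iff] <;> omega)

end BDMAux

namespace BDMAux2

def stepA (M : ℕ) (p : Bool × ZMod M) (b : Bool) : Bool × ZMod M :=
  match p with
  | (false, i) => (true, 2 * i + (if b then 1 else 0))
  | (true, i) => (false, -(2 * i) - 1 - (if b then 1 else 0))

def foldA (M : ℕ) (p : Bool × ZMod M) (bits : List Bool) : Bool × ZMod M :=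
  bits.foldl (stepA M) p

def reps : List Bool → ℕ
  | a :: b :: t => (if a = b then 1 else 0) + reps (b :: t)
  | _ => 0

def totcost (β0 : Bool) (bits : List Bool) (β1 : Bool) : ℕ :=
  bits.length + reps ((!β0) :: bits) + (if bits.getLastD (!β0) = β1 then 1 else 0)

lemma foldA_append (M : ℕ) (p : Bool × ZMod M) (l : List Bool) (b : Bool) :
    foldA M p (l ++ [b]) = stepA M (foldA M p l) b :=
  List.foldl_append ..

lemma reps_concat : ∀ (t : List Bool) (a x : Bool),
    reps (a :: (t ++ [x])) = reps (a :: t) + (if t.getLastD a = x then 1 else 0)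
  | [], a, x => by
    simp only [List.nil_append, List.getLastD_nil, reps]
    cases a <;> cases x <;> rfl
  | b :: t, a, x => by
    have h := reps_concat t b x
    simp only [List.cons_append, List.getLastD_cons]
    simp only [reps]
    rw [h]
    omega

lemma totcost_concat (β0 : Bool) (bits : List Bool) (b β1 : Bool) :
    totcost β0 (bits ++ [b]) β1
      = totcost β0 bits b + 1 + (if b = β1 then 1 else 0) := by
  unfold totcost
  have h1 : ((!β0) :: (bits ++ [b])) = (!β0) :: (bits ++ [b]) := rfl
  rw [reps_concat bits (!β0) b, List.getLastD_concat]
  simp only [List.length_append, List.length_cons, List.length_nil]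
  omega

lemma length_le_totcost (β0 : Bool) (bits : List Bool) (β1 : Bool) :
    bits.length ≤ totcost β0 bits β1 := by
  unfold totcost; omega

end BDMAux2


namespace BDMAux3
open BDMAux BDMAux2

lemma bdmOut_eq (m : ℕ) (α : Bool) (i : ZMod m) (β : Bool) :
    bdmOut m (α, i, β) = ((stepA m (α, i) β).1, (stepA m (α, i) β).2, !β) := by
  rcases α with _|_ <;> rcases β with _|_ <;>
    simp [bdmOut, stepA] <;> ring

/-- canonical word realizing a bit sequence, starting from undirected state β -/
def mkW (β : Bool) : List Bool → List Bool
  | [] => []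
  | b :: t => (if b = β then [true] else [false, true]) ++ mkW (!b) t

lemma mkW_spec (m : ℕ) : ∀ (bits : List Bool) (α : Bool) (i : ZMod m) (β : Bool),
    wfold m (α, i, β) (mkW β bits)
      = ((foldA m (α, i) bits).1, (foldA m (α, i) bits).2, !(bits.getLastD (!β)))
    ∧ (mkW β bits).length = bits.length + reps ((!β) :: bits)
  | [], α, i, β => by simp [mkW, wfold, foldA, reps]
  | b :: t, α, i, β => by
    have ih := mkW_spec m t (stepA m (α, i) b).1 (stepA m (α, i) b).2 (!b)
    have hfa : foldA m (α, i) (b :: t) = foldA m (stepA m (α, i) b) t := rfl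
    rcases eq_or_ne b β with hb | hb
    · subst hb
      constructor
      · have h1 : wfold m (α, i, b) (mkW b (b :: t))
            = wfold m (bdmOut m (α, i, b)) (mkW (!b) t) := by
          simp [mkW, wfold, wstep]
        rw [h1, bdmOut_eq, ih.1, hfa, Bool.not_not, List.getLastD_cons]
      · have h2 : (mkW b (b :: t)).length = (mkW (!b) t).length + 1 := by
          simp [mkW]
        rw [h2, ih.2]
        have h3 : reps ((!b) :: b :: t) = reps (b :: t) := by
          rcases b with _|_ <;> simp [reps]
        simp only [Bool.not_not, List.length_cons, h3]
        omega
    · have hb' : β = !b := by rcases b with _|_ <;> rcases β with _|_ <;> simp_all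
      subst hb'
      constructor
      · have h1 : wfold m (α, i, !b) (mkW (!b) (b :: t))
            = wfold m (bdmOut m (α, i, b)) (mkW (!b) t) := by
          simp [mkW, wfold, wstep, hb]
        rw [h1, bdmOut_eq, ih.1, hfa, Bool.not_not, List.getLastD_cons]
      · have h2 : (mkW (!b) (b :: t)).length = (mkW (!b) t).length + 2 := by
          simp [mkW, hb]
        rw [h2, ih.2]
        have h3 : reps (b :: b :: t) = 1 + reps (b :: t) := by
          simp [reps]
        simp only [Bool.not_not, List.length_cons, h3]
        omega

/-- soundness: from a bit list we get an actual walk-word of length `totcost`. -/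
lemma sound (m : ℕ) (bits : List Bool) (α : Bool) (i : ZMod m) (β0 β1 : Bool) :
    ∃ w : List Bool, w.length = totcost β0 bits β1 ∧
      wfold m (α, i, β0) w = ((foldA m (α, i) bits).1, (foldA m (α, i) bits).2, β1) := by
  rcases eq_or_ne (bits.getLastD (!β0)) β1 with h | h
  · refine ⟨mkW β0 bits ++ [false], ?_, ?_⟩
    · rw [List.length_append, (mkW_spec m bits α i β0).2, totcost, if_pos h]
      simp
    · rw [wfold_append, (mkW_spec m bits α i β0).1, h]
      simp [wfold, wstep]
  · refine ⟨mkW β0 bits, ?_, ?_⟩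
    · rw [(mkW_spec m bits α i β0).2, totcost, if_neg h]
      simp
    · rw [(mkW_spec m bits α i β0).1]
      rw [show (!(bits.getLastD (!β0))) = β1 from by
        revert h; cases bits.getLastD (!β0) <;> cases β1 <;> simp]

/-- completeness: every walk-word yields a bit list of no larger cost. -/
lemma complete (m : ℕ) (α0 : Bool) (i : ZMod m) (β0 : Bool) (w : List Bool) :
    ∃ bits : List Bool,
      foldA m (α0, i) bits = ((wfold m (α0, i, β0) w).1, (wfold m (α0, i, β0) w).2.1)
      ∧ totcost β0 bits (wfold m (α0, i, β0) w).2.2 ≤ w.length := by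
  induction w using List.reverseRecOn with
  | nil =>
    refine ⟨[], by simp [foldA, wfold], ?_⟩
    simp [wfold, totcost, reps]
  | append_singleton w s ih =>
    obtain ⟨bits, hfold, hcost⟩ := ih
    rcases hu : wfold m (α0, i, β0) w with ⟨α, j, β⟩
    rw [hu] at hfold hcost
    dsimp only at hfold hcost
    have hw1 : wfold m (α0, i, β0) (w ++ [s]) = wstep m (α, j, β) s := by
      rw [wfold_append, hu]; rfl
    rcases s with _ | _
    · refine ⟨bits, ?_, ?_⟩
      · rw [hw1]; simpa [wstep] using hfold
      · rw [hw1, show wstep m (α, j, β) false = (α, j, !β) from rfl]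
        have h2 : totcost β0 bits (!β) ≤ totcost β0 bits β + 1 := by
          unfold totcost; split_ifs <;> omega
        simp only [List.length_append, List.length_cons, List.length_nil]
        omega
    · have hbo : wstep m (α, j, β) true = bdmOut m (α, j, β) := rfl
      refine ⟨bits ++ [β], ?_, ?_⟩
      · rw [hw1, hbo, bdmOut_eq, foldA_append, hfold]
      · rw [hw1, hbo, bdmOut_eq]
        rw [totcost_concat]
        simp only [List.length_append, List.length_cons, List.length_nil]
        have h5 : (if β = !β then 1 else 0) = 0 := by rcases β with _|_ <;> simp
        omega

end BDMAux3

namespace BDMAux4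
open BDMAux2

noncomputable section
variable (M : ℕ)

/-- projection to half the modulus -/
def pr : ZMod (2*M) →+* ZMod M := ZMod.castHom (dvd_mul_left M 2) (ZMod M)

/-- parity map -/
def pa : ZMod (2*M) →+* ZMod 2 := ZMod.castHom (Dvd.intro M rfl) (ZMod 2)

lemma stepA_cast (p : Bool × ZMod (2*M)) (b : Bool) :
    stepA M (p.1, pr M p.2) b = ((stepA (2*M) p b).1, pr M (stepA (2*M) p b).2) := by
  obtain ⟨α, x⟩ := p
  rcases α with _|_ <;> rcases b with _|_ <;>
    simp [stepA, map_add, map_mul, map_sub, map_neg, map_one, map_ofNat]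

lemma foldA_cast : ∀ (bits : List Bool) (p : Bool × ZMod (2*M)),
    foldA M (p.1, pr M p.2) bits = ((foldA (2*M) p bits).1, pr M (foldA (2*M) p bits).2)
  | [], p => rfl
  | b :: t, p => by
    have h1 : foldA M (p.1, pr M p.2) (b :: t)
        = foldA M (stepA M (p.1, pr M p.2) b) t := rfl
    rw [h1, stepA_cast]
    exact foldA_cast t (stepA (2*M) p b)

lemma two_mul_eq_zero [NeZero M] (Y : ZMod (2*M)) (h : 2 * Y = 0) : pr M Y = 0 := by
  haveI : NeZero (2*M) := ⟨by have := NeZero.ne M; omega⟩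
  have h1 : ((2 * Y.val : ℕ) : ZMod (2*M)) = 0 := by
    push_cast
    rw [ZMod.natCast_val, ZMod.cast_id]
    exact h
  have h2 : (2*M) ∣ 2 * Y.val := (ZMod.natCast_eq_zero_iff _ _).1 h1
  have h3 : M ∣ Y.val := by
    obtain ⟨q, hq⟩ := h2
    exact ⟨q, Nat.eq_of_mul_eq_mul_left two_pos (by rw [hq]; ring)⟩
  have h4 : pr M Y = ((Y.val : ℕ) : ZMod M) := by
    rw [pr, ZMod.castHom_apply, ZMod.natCast_val]
  rw [h4]
  exact (ZMod.natCast_eq_zero_iff _ _).2 h3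

lemma pr_eq_of_two_mul_eq [NeZero M] (X : ZMod (2*M)) (c : ℤ)
    (h : 2 * X = ((2*c : ℤ) : ZMod (2*M))) : pr M X = ((c : ℤ) : ZMod M) := by
  have h1 : 2 * (X - ((c : ℤ) : ZMod (2*M))) = 0 := by
    push_cast at h ⊢
    linear_combination h
  have h2 := two_mul_eq_zero M _ h1
  rw [map_sub] at h2
  have h3 : pr M ((c : ℤ) : ZMod (2*M)) = ((c : ℤ) : ZMod M) := map_intCast _ _
  rw [h3] at h2
  linear_combination h2

/-- lift: if `pr X = t` then `2X = 2t` upstairs (t a natural). -/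
lemma two_mul_lift [NeZero M] (X : ZMod (2*M)) (t : ℕ) (h : pr M X = (t : ZMod M)) :
    2 * X = ((2*t : ℕ) : ZMod (2*M)) := by
  haveI : NeZero (2*M) := ⟨by have := NeZero.ne M; omega⟩
  have h4 : pr M X = ((X.val : ℕ) : ZMod M) := by
    rw [pr, ZMod.castHom_apply, ZMod.natCast_val]
  rw [h4] at h
  have h5 : X.val ≡ t [MOD M] := (ZMod.natCast_eq_natCast_iff _ _ _).1 h
  have h6 : 2 * X.val ≡ 2 * t [MOD 2*M] := by
    unfold Nat.ModEq at h5 ⊢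
    rw [Nat.mul_mod_mul_left, Nat.mul_mod_mul_left, h5]
  have h7 := (ZMod.natCast_eq_natCast_iff _ _ _).2 h6
  rw [← h7]
  push_cast
  rw [ZMod.natCast_val, ZMod.cast_id]

def bitv (b : Bool) : ZMod (2*M) := if b then 1 else 0

def UP (M B : ℕ) : Prop := ∀ (α0 β0 α1 β1 : Bool) (i j : ZMod M),
  ∃ bits : List Bool, foldA M (α0, i) bits = (α1, j) ∧ totcost β0 bits β1 ≤ B

lemma up_step (B : ℕ) [NeZero M] (h : UP M B) : UP (2*M) (B+2) := by
  haveI : NeZero (2*M) := ⟨by have := NeZero.ne M; omega⟩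
  intro α0 β0 α1 β1 i j
  have hJlt : j.val < 2*M := ZMod.val_lt j
  have hjj : ((j.val : ℕ) : ZMod (2*M)) = j := by
    rw [ZMod.natCast_val, ZMod.cast_id]
  rcases α1 with _|_
  -- α1 = false : previous class is true
  · set K := 2*M - 1 - j.val with hK
    set b : Bool := decide (K % 2 = 1) with hb
    obtain ⟨bits, hfold, hcost⟩ := h α0 β0 true b (pr M i) ((K/2 : ℕ) : ZMod M)
    have hcast := foldA_cast M bits (α0, i)
    rcases hbig : foldA (2*M) (α0, i) bits with ⟨cls, X⟩
    rw [hbig] at hcast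
    rw [hcast] at hfold
    dsimp only at hfold
    obtain ⟨hcls, hX⟩ := Prod.mk.injEq .. ▸ hfold
    have h2X : 2 * X = ((2*(K/2) : ℕ) : ZMod (2*M)) := two_mul_lift M X _ hX
    have hKb : (K : ℕ) = 2*(K/2) + (if b then 1 else 0) := by
      rcases Nat.mod_two_eq_zero_or_one K with hp | hp <;> simp [hb, hp] <;> omega
    have hsum : ((K : ℕ) : ZMod (2*M)) + 1 + ((j.val : ℕ) : ZMod (2*M)) = 0 := by
      rw [show ((1 : ZMod (2*M))) = ((1:ℕ) : ZMod (2*M)) by push_cast; ring]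
      rw [← Nat.cast_add, ← Nat.cast_add]
      rw [show K + 1 + j.val = 2*M from by omega]
      exact ZMod.natCast_self _
    refine ⟨bits ++ [b], ?_, ?_⟩
    · rw [foldA_append, hbig, hcls]
      show (false, -(2*X) - 1 - (if b then 1 else 0)) = (false, j)
      have hKC : ((K:ℕ) : ZMod (2*M)) = 2*X + (if b then 1 else 0) := by
        rw [h2X]
        conv_lhs => rw [hKb]
        push_cast
        rcases b with _|_ <;> simp
      rw [Prod.mk.injEq]
      refine ⟨rfl, ?_⟩
      rw [← hjj]
      have := hsum
      rw [hKC] at this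
      linear_combination -this
    · rw [totcost_concat]
      split_ifs <;> omega
  -- α1 = true : previous class is false
  · set K := j.val with hK
    set b : Bool := decide (K % 2 = 1) with hb
    obtain ⟨bits, hfold, hcost⟩ := h α0 β0 false b (pr M i) ((K/2 : ℕ) : ZMod M)
    have hcast := foldA_cast M bits (α0, i)
    rcases hbig : foldA (2*M) (α0, i) bits with ⟨cls, X⟩
    rw [hbig] at hcast
    rw [hcast] at hfold
    dsimp only at hfold
    obtain ⟨hcls, hX⟩ := Prod.mk.injEq .. ▸ hfold
    have h2X : 2 * X = ((2*(K/2) : ℕ) : ZMod (2*M)) := two_mul_lift M X _ hX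
    have hKb : (K : ℕ) = 2*(K/2) + (if b then 1 else 0) := by
      rcases Nat.mod_two_eq_zero_or_one K with hp | hp <;> simp [hb, hp] <;> omega
    refine ⟨bits ++ [b], ?_, ?_⟩
    · rw [foldA_append, hbig, hcls]
      show (true, 2*X + (if b then 1 else 0)) = (true, j)
      have hKC : ((K:ℕ) : ZMod (2*M)) = 2*X + (if b then 1 else 0) := by
        rw [h2X]
        conv_lhs => rw [hKb]
        push_cast
        rcases b with _|_ <;> simp
      rw [Prod.mk.injEq]
      exact ⟨rfl, by rw [← hKC, hK, hjj]⟩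
    · rw [totcost_concat]
      split_ifs <;> omega

def LO (M B : ℕ) (γ : Bool) (c : ℤ) : Prop :=
  ∀ bits : List Bool, foldA M (false, 0) bits = (γ, ((c : ℤ) : ZMod M)) →
    B ≤ totcost false bits false

lemma lo_step (B : ℕ) [NeZero M] (γ : Bool) (c : ℤ) (h : LO M B γ c) :
    LO (2*M) (B+2) (!γ) (if γ then -2*c-1 else 2*c) := by
  haveI : NeZero (2*M) := ⟨by have := NeZero.ne M; omega⟩
  intro bits hfold
  rcases bits.eq_nil_or_concat with rfl | ⟨pre, b, rfl⟩
  · exfalso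
    have h0 : foldA (2*M) (false, 0) [] = ((false : Bool), (0 : ZMod (2*M))) := rfl
    rw [h0] at hfold
    obtain ⟨h1, h2⟩ := Prod.mk.injEq .. ▸ hfold
    rcases γ with _|_
    · simp at h1
    · have h2' : ((-2*c-1 : ℤ) : ZMod (2*M)) = 0 := by
        rw [if_pos rfl] at h2
        exact h2.symm
      have h3 := congrArg (pa M) h2'
      rw [map_zero, map_intCast] at h3
      have h4 : ((-2*c-1 : ℤ) : ZMod 2) = 1 := by
        push_cast
        rw [show ((2:ZMod 2)) = 0 from rfl]
        ring_nf
        decide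
      rw [h4] at h3
      exact one_ne_zero h3
  · rw [List.concat_eq_append] at hfold ⊢
    rw [foldA_append] at hfold
    rcases hp : foldA (2*M) (false, 0) pre with ⟨cls, X⟩
    rw [hp] at hfold
    have hpre : foldA M (false, (0 : ZMod M)) pre = (cls, pr M X) := by
      have := foldA_cast M pre (false, 0)
      rw [hp] at this
      simpa using this
    -- get the common equation 2X + bit = 2c
    have key : 2*X + (if b then (1:ZMod (2*M)) else 0) = ((2*c : ℤ) : ZMod (2*M)) := by
      rcases cls with _|_
      · have hstep : stepA (2*M) (false, X) b = (true, 2*X + (if b then 1 else 0)) := rfl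
        rw [hstep] at hfold
        obtain ⟨h1, h2⟩ := Prod.mk.injEq .. ▸ hfold
        have hγ : γ = false := by
          cases γ
          · rfl
          · simp at h1
        subst hγ
        rw [if_neg (by decide : ¬(false = true))] at h2
        exact h2
      · have hstep : stepA (2*M) (true, X) b = (false, -(2*X) - 1 - (if b then 1 else 0)) := rfl
        rw [hstep] at hfold
        obtain ⟨h1, h2⟩ := Prod.mk.injEq .. ▸ hfold
        have hγ : γ = true := by
          cases γ
          · simp at h1
          · rfl
        subst hγ
        rw [if_pos rfl] at h2
        push_cast at h2 ⊢
        linear_combination -h2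
    -- the class of the prefix and of γ
    have hclsγ : cls = γ := by
      rcases cls with _|_ <;> rcases γ with _|_
      · rfl
      · exfalso
        have hstep : stepA (2*M) (false, X) b = (true, 2*X + (if b then 1 else 0)) := rfl
        rw [hstep] at hfold
        obtain ⟨h1, -⟩ := Prod.mk.injEq .. ▸ hfold
        simp at h1
      · exfalso
        have hstep : stepA (2*M) (true, X) b = (false, -(2*X) - 1 - (if b then 1 else 0)) := rfl
        rw [hstep] at hfold
        obtain ⟨h1, -⟩ := Prod.mk.injEq .. ▸ hfold
        simp at h1
      · rfl
    -- parity forces b = false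
    have hb : b = false := by
      rcases b with _|_
      · rfl
      · exfalso
        rw [if_pos rfl] at key
        have h3 := congrArg (pa M) key
        rw [map_add, map_mul, map_one, map_intCast, map_ofNat] at h3
        have h5 : ((2:ZMod 2)) = 0 := rfl
        rw [h5] at h3
        push_cast at h3
        rw [h5] at h3
        simp at h3
    subst hb
    rw [if_neg (by decide : ¬(false = true)), add_zero] at key
    have hX : pr M X = ((c : ℤ) : ZMod M) := pr_eq_of_two_mul_eq M X c key
    rw [hX, hclsγ] at hpre
    have hB := h pre hpre
    rw [totcost_concat, if_pos rfl]
    omega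

end
end BDMAux4

namespace BDMAux5
open BDMAux2 BDMAux4

def allLists : ℕ → List (List Bool)
  | 0 => [[]]
  | n+1 => [] :: (allLists n).flatMap (fun t => [true :: t, false :: t])

lemma mem_allLists : ∀ (l : List Bool) (n : ℕ), l.length ≤ n → l ∈ allLists n := by
  intro l
  induction l with
  | nil =>
    intro n _
    cases n with
    | zero => simp [allLists]
    | succ n => simp [allLists]
  | cons b t ih =>
    intro n hn
    cases n with
    | zero => simp at hn
    | succ n =>
      have ht : t ∈ allLists n := ih n (by simpa using hn)
      rcases b with _|_ <;>
      · simp only [allLists, List.mem_cons, List.mem_flatMap]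
        right
        exact ⟨t, ht, by simp⟩

set_option maxRecDepth 10000 in
lemma lo_base : LO 5 6 true 3 := by
  intro bits hfold
  by_contra hlt
  push_neg at hlt
  have hlen : bits.length ≤ 5 :=
    le_trans (length_le_totcost false bits false) (by omega)
  have hmem := mem_allLists bits 5 hlen
  have hall : ∀ bs ∈ allLists 5,
      (!(decide (foldA 5 (false, (0:ZMod 5)) bs = (true, ((3:ℤ) : ZMod 5))))
        || decide (6 ≤ totcost false bs false)) = true := by decide
  have h2 := hall bits hmem
  rw [hfold] at h2
  simp at h2
  omega
end BDMAux5

namespace UPBASE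
open BDMAux2 BDMAux4 BDMAux5
set_option maxRecDepth 40000 in
lemma up_base : UP 5 6 := by
  intro α0 β0 α1 β1 i j
  have h : ((allLists 6).any fun bits =>
      decide (foldA 5 (α0, i) bits = (α1, j)) && decide (totcost β0 bits β1 ≤ 6)) = true := by
    revert α0 β0 α1 β1 i j
    decide
  obtain ⟨bits, -, hb⟩ := List.any_eq_true.1 h
  rw [Bool.and_eq_true, decide_eq_true_eq, decide_eq_true_eq] at hb
  exact ⟨bits, hb.1, hb.2⟩
end UPBASE


namespace BDMFinal
open BDMAux BDMAux2 BDMAux3 BDMAux4 BDMAux5 UPBASE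

def classB (k : ℕ) : Bool := decide (k % 2 = 0)

def cseq : ℕ → ℤ
  | 0 => 3
  | k+1 => if classB k then -2 * cseq k - 1 else 2 * cseq k

lemma classB_succ (k : ℕ) : classB (k+1) = !classB k := by
  rcases Nat.mod_two_eq_zero_or_one k with h | h
  · have h1 : (k+1) % 2 = 1 := by omega
    simp [classB, h, h1]
  · have h1 : (k+1) % 2 = 0 := by omega
    simp [classB, h, h1]

lemma up_all (k : ℕ) : UP (5 * 2^k) (2*k + 6) := by
  induction k with
  | zero =>
    rw [show (5 * 2^0) = 5 by norm_num]
    exact up_base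
  | succ k ih =>
    haveI : NeZero (5 * 2^k) := ⟨by positivity⟩
    have h2 := up_step (5 * 2^k) (2*k+6) ih
    have hM : 5 * 2^(k+1) = 2 * (5 * 2^k) := by ring
    have hB : 2*(k+1) + 6 = (2*k+6) + 2 := by ring
    rw [hM, hB]
    exact h2

lemma lo_all (k : ℕ) : LO (5 * 2^k) (2*k + 6) (classB k) (cseq k) := by
  induction k with
  | zero =>
    rw [show classB 0 = true from rfl, show cseq 0 = 3 from rfl,
      show (5 * 2^0) = 5 by norm_num]
    exact lo_base
  | succ k ih =>
    haveI : NeZero (5 * 2^k) := ⟨by positivity⟩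
    have h2 := lo_step (5 * 2^k) (2*k+6) (classB k) (cseq k) ih
    have hM : 5 * 2^(k+1) = 2 * (5 * 2^k) := by ring
    have hB : 2*(k+1) + 6 = (2*k+6) + 2 := by ring
    have hc : cseq (k+1) = if classB k then -2 * cseq k - 1 else 2 * cseq k := rfl
    rw [hM, hB, classB_succ, hc]
    exact h2

end BDMFinal


open BDMAux BDMAux2 BDMAux3 BDMAux4 BDMAux5 UPBASE BDMFinal

/-- For $n ≥ 3$ and $m = 2^{n-1} + 2^{n-3}$, the diameter of $BDM(2,m)$ is exactly $2n$:
every ordered pair of vertices is joined by a directed walk of length at most $2n$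
in the associated digraph, and some ordered pair has no directed walk of length
less than $2n$. -/
theorem BDM_diameter_eq_two_n (n m : ℕ) (hn : 3 ≤ n)
    (hm : m = 2 ^ (n - 1) + 2 ^ (n - 3)) :
    (∀ u v : BDMVertex m, ∃ d ≤ 2 * n, hasWalk (bdmStep m) d u v) ∧
    (∃ u v : BDMVertex m, ∀ d < 2 * n, ¬ hasWalk (bdmStep m) d u v) := by
  have hm5 : m = 5 * 2^(n-3) := by
    rw [hm, show n - 1 = (n-3) + 2 from by omega, pow_add]
    ring
  subst hm5
  constructor
  · rintro ⟨α0, i, β0⟩ ⟨α1, j, β1⟩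
    obtain ⟨bits, hfold, hcost⟩ := up_all (n-3) α0 β0 α1 β1 i j
    obtain ⟨w, hlen, hwf⟩ := sound (5 * 2^(n-3)) bits α0 i β0 β1
    refine ⟨w.length, by omega, ?_⟩
    rw [walk_iff_word]
    refine ⟨w, rfl, ?_⟩
    rw [hwf, hfold]
  · refine ⟨(false, 0, false),
      (classB (n-3), ((cseq (n-3) : ℤ) : ZMod (5 * 2^(n-3))), false), ?_⟩
    intro d hd hwalk
    rw [walk_iff_word] at hwalk
    obtain ⟨w, hlen, hwf⟩ := hwalk
    have hpar := wfold_beta (5 * 2^(n-3)) w (false, 0, false)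
    rw [hwf] at hpar
    dsimp only at hpar
    have hdev : w.length % 2 = 0 := by
      by_contra hodd
      have h1 : w.length % 2 = 1 := by omega
      rw [h1] at hpar
      simp at hpar
    obtain ⟨bits, hfold, hcost⟩ := complete (5 * 2^(n-3)) false 0 false w
    rw [hwf] at hfold hcost
    dsimp only at hfold hcost
    have hlow := lo_all (n-3) bits hfold
    omega
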